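/- Let P_NE be the behaviour in the (2,2,2,2) Bell scenario with ⟨A_x⟩ = ⟨B_y⟩ = 0 for all x,y, ⟨A₀B₀⟩ = ⟨A₀B₁⟩ = ⟨A₁B₀⟩ = 1/2 and ⟨A₁B₁⟩ = −1 (probabilities recovered via P(ab|xy) = (1 + (−1)^a⟨A_x⟩ + (−1)^b⟨B_y⟩ + (−1)^{a+b}⟨A_xB_y⟩)/4). Then P_NE ∈ Q, but P_NE is not an exposed point of Q: there is no Bell function B ∈ ℝ^16 such that {P ∈ Q : B·P = max_{P'∈Q} B·P'} = {P_NE}. -/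

import Mathlib

open Matrix Kronecker ComplexOrder BigOperators

/-- A behaviour in the (2,2,2,2) Bell scenario: `P a b x y = P(ab|xy)`. -/
abbrev Behaviour : Type := Fin 2 → Fin 2 → Fin 2 → Fin 2 → ℝ

/-- `P` admits a quantum realisation of local dimension `d`. -/
def HasRealisation (d : ℕ) (P : Behaviour) : Prop :=
  ∃ (ρ : Matrix (Fin d × Fin d) (Fin d × Fin d) ℂ)
    (E F : Fin 2 → Fin 2 → Matrix (Fin d) (Fin d) ℂ),
    ρ.PosSemidef ∧ ρ.trace = 1 ∧
    (∀ x a, (E x a).PosSemidef) ∧ (∀ y b, (F y b).PosSemidef) ∧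
    (∀ x, ∑ a, E x a = 1) ∧ (∀ y, ∑ b, F y b = 1) ∧
    ∀ a b x y, (P a b x y : ℂ) = ((E x a ⊗ₖ F y b) * ρ).trace

def Qfinite : Set Behaviour := {P | ∃ d : ℕ, 0 < d ∧ HasRealisation d P}

def Q : Set Behaviour := closure Qfinite

def detBehaviour (f g : Fin 2 → Fin 2) : Behaviour :=
  fun a b x y => if a = f x ∧ b = g y then 1 else 0

def L : Set Behaviour := convexHull ℝ {P | ∃ f g, P = detBehaviour f g}

def NS : Set Behaviour :=
  {P | (∀ a b x y, 0 ≤ P a b x y) ∧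
       (∀ x y : Fin 2, ∑ a : Fin 2, ∑ b : Fin 2, P a b x y = 1) ∧
       (∀ (a x y y' : Fin 2), ∑ b : Fin 2, P a b x y = ∑ b : Fin 2, P a b x y') ∧
       (∀ (b x x' y : Fin 2), ∑ a : Fin 2, P a b x y = ∑ a : Fin 2, P a b x' y)}

def margA (P : Behaviour) (x : Fin 2) : ℝ :=
  ∑ a : Fin 2, ∑ b : Fin 2, (-1 : ℝ) ^ (a : ℕ) * P a b x 0

def margB (P : Behaviour) (y : Fin 2) : ℝ :=
  ∑ a : Fin 2, ∑ b : Fin 2, (-1 : ℝ) ^ (b : ℕ) * P a b 0 y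

def corr (P : Behaviour) (x y : Fin 2) : ℝ :=
  ∑ a : Fin 2, ∑ b : Fin 2, (-1 : ℝ) ^ ((a : ℕ) + (b : ℕ)) * P a b x y

def chsh (P : Behaviour) : ℝ := corr P 0 0 + corr P 0 1 + corr P 1 0 - corr P 1 1

def bell (B P : Behaviour) : ℝ := ∑ a : Fin 2, ∑ b : Fin 2, ∑ x : Fin 2, ∑ y : Fin 2, B a b x y * P a b x y

noncomputable def beta (B : Behaviour) (S : Set Behaviour) : ℝ := sSup (bell B '' S)

def face (B : Behaviour) (S : Set Behaviour) : Set Behaviour :=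
  {P ∈ S | bell B P = beta B S}

/-- Reconstruct a behaviour from marginals and correlators. -/
noncomputable def fromCorr (mA mB : Fin 2 → ℝ) (c : Fin 2 → Fin 2 → ℝ) : Behaviour :=
  fun a b x y =>
    (1 + (-1 : ℝ) ^ (a : ℕ) * mA x + (-1 : ℝ) ^ (b : ℕ) * mB y
      + (-1 : ℝ) ^ ((a : ℕ) + (b : ℕ)) * c x y) / 4


/-- The non-exposed point `P_NE`: zero marginals,
`⟨A₀B₀⟩ = ⟨A₀B₁⟩ = ⟨A₁B₀⟩ = 1/2` and `⟨A₁B₁⟩ = −1`. -/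
noncomputable def PNE : Behaviour :=
  fromCorr (fun _ => 0) (fun _ => 0) ![![1 / 2, 1 / 2], ![1 / 2, -1]]

/-- measurement vectors: row `a` is the Bloch-vector (half-angle) for outcome `a`. -/
noncomputable def mv (α : ℝ) : Fin 2 → Fin 2 → ℝ :=
  ![![Real.cos α, Real.sin α], ![-Real.sin α, Real.cos α]]

noncomputable def projM (α : ℝ) (a : Fin 2) : Matrix (Fin 2) (Fin 2) ℂ :=
  Matrix.of fun i j => ((mv α a i * mv α a j : ℝ) : ℂ)

lemma projM_psd (α : ℝ) (a : Fin 2) : (projM α a).PosSemidef := by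
  have h : projM α a =
      (Matrix.of fun (_ : Fin 1) j => ((mv α a j : ℝ) : ℂ))ᴴ *
      (Matrix.of fun (_ : Fin 1) j => ((mv α a j : ℝ) : ℂ)) := by
    ext i j
    simp [Matrix.mul_apply, Matrix.conjTranspose_apply, projM, Complex.conj_ofReal]
  rw [h]
  exact Matrix.posSemidef_conjTranspose_mul_self _

lemma projM_sum (α : ℝ) : ∑ a, projM α a = 1 := by
  ext i j
  fin_cases i <;> fin_cases j <;>
    simp [Fin.sum_univ_two, projM, mv, Matrix.one_apply] <;>
    first
      | linear_combination Complex.sin_sq_add_cos_sq (α:ℂ)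
      | ring

/-- sign pattern of the (unnormalised) singlet vector. -/
def psign : Fin 2 × Fin 2 → ℝ := fun p => ![![0, 1], ![-1, 0]] p.1 p.2

/-- The singlet state. -/
noncomputable def rhoS : Matrix (Fin 2 × Fin 2) (Fin 2 × Fin 2) ℂ :=
  Matrix.of fun p q => ((psign p * psign q / 2 : ℝ) : ℂ)

lemma rhoS_psd : rhoS.PosSemidef := by
  have h : rhoS =
      (Matrix.of fun (_ : Fin 1) p => ((psign p / Real.sqrt 2 : ℝ) : ℂ))ᴴ *
      (Matrix.of fun (_ : Fin 1) p => ((psign p / Real.sqrt 2 : ℝ) : ℂ)) := by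
    ext p q
    simp only [Matrix.mul_apply, Matrix.conjTranspose_apply, Matrix.of_apply, rhoS,
      Fin.sum_univ_one]
    rw [RCLike.star_def, Complex.conj_ofReal, ← Complex.ofReal_mul, Complex.ofReal_inj,
      div_mul_div_comm, Real.mul_self_sqrt (by norm_num)]
  rw [h]
  exact Matrix.posSemidef_conjTranspose_mul_self _

lemma rhoS_trace : rhoS.trace = 1 := by
  simp [Matrix.trace, rhoS, Fintype.sum_prod_type, Fin.sum_univ_two, psign]
  norm_num

lemma cos_expand (u v : ℝ) :
    Real.cos (u - v) =
      (2 * Real.cos (u/2) ^ 2 - 1) * (2 * Real.cos (v/2) ^ 2 - 1)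
        + (2 * Real.sin (u/2) * Real.cos (u/2)) * (2 * Real.sin (v/2) * Real.cos (v/2)) := by
  rw [show u - v = 2*(u/2) - 2*(v/2) by ring, Real.cos_sub, Real.cos_two_mul, Real.cos_two_mul,
    Real.sin_two_mul, Real.sin_two_mul]

lemma singlet_real (θ φ : Fin 2 → ℝ) :
    HasRealisation 2 (fromCorr (fun _ => 0) (fun _ => 0)
      (fun x y => -Real.cos (θ x - φ y))) := by
  refine ⟨rhoS, fun x a => projM (θ x / 2) a, fun y b => projM (φ y / 2) b,
    rhoS_psd, rhoS_trace, fun x a => projM_psd _ _, fun y b => projM_psd _ _,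
    fun x => projM_sum _, fun y => projM_sum _, ?_⟩
  intro a b x y
  have hc := cos_expand (θ x) (φ y)
  have hα : Real.sin (θ x / 2) ^ 2 + Real.cos (θ x / 2) ^ 2 = 1 := Real.sin_sq_add_cos_sq _
  have hβ : Real.sin (φ y / 2) ^ 2 + Real.cos (φ y / 2) ^ 2 = 1 := Real.sin_sq_add_cos_sq _
  have hcC := congrArg (Complex.ofReal) hc
  have hαC := congrArg (Complex.ofReal) hα
  have hβC := congrArg (Complex.ofReal) hβ
  push_cast at hcC hαC hβC
  fin_cases a <;> fin_cases b <;>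
    simp [fromCorr, Matrix.trace, Matrix.mul_apply, Matrix.kroneckerMap_apply,
      Fintype.sum_prod_type, Fin.sum_univ_two, projM, mv, rhoS, psign] <;>
    push_cast <;>
    first
      | linear_combination (-1/4 : ℂ) * hcC - (Complex.cos ((φ y : ℂ)/2))^2/2 * hαC
          - (Complex.cos ((θ x : ℂ)/2))^2/2 * hβC
      | linear_combination (1/4 : ℂ) * hcC + ((Complex.cos ((φ y : ℂ)/2))^2-1)/2 * hαC
          - (Complex.sin ((θ x : ℂ)/2))^2/2 * hβC

/-- classical (diagonal) realisation of the local point with correlators (0,0,0,-1). -/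
noncomputable def rho0 : Matrix (Fin 2 × Fin 2) (Fin 2 × Fin 2) ℂ :=
  Matrix.diagonal (fun p => if p.1 = p.2 then 0 else (1/2 : ℂ))

noncomputable def Ediag (x a : Fin 2) : Matrix (Fin 2) (Fin 2) ℂ :=
  if x = 0 then Matrix.diagonal (fun _ => (1/2 : ℂ))
  else Matrix.diagonal (fun i => if i = a then 1 else 0)

lemma cnonneg_half : (0:ℂ) ≤ (1/2 : ℂ) := by
  rw [show ((1/2 : ℂ)) = ((1/2 : ℝ) : ℂ) by norm_num]
  exact Complex.zero_le_real.mpr (by norm_num)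

lemma cnonneg_one : (0:ℂ) ≤ (1 : ℂ) := by
  rw [show ((1 : ℂ)) = ((1 : ℝ) : ℂ) by norm_num]
  exact Complex.zero_le_real.mpr (by norm_num)

lemma rho0_psd : rho0.PosSemidef := by
  refine Matrix.posSemidef_diagonal_iff.mpr fun i => ?_
  split_ifs
  · exact le_refl 0
  · exact cnonneg_half

lemma Ediag_psd (x a : Fin 2) : (Ediag x a).PosSemidef := by
  unfold Ediag
  split_ifs <;> refine Matrix.posSemidef_diagonal_iff.mpr fun i => ?_
  · exact cnonneg_half
  · split_ifs
    · exact cnonneg_one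
    · exact le_refl 0

lemma Ediag_sum (x : Fin 2) : ∑ a, Ediag x a = 1 := by
  unfold Ediag
  ext i j
  fin_cases x <;> fin_cases i <;> fin_cases j <;>
    simp [Fin.sum_univ_two, Matrix.diagonal, Matrix.one_apply] <;> norm_num

lemma local0_real :
    HasRealisation 2 (fromCorr (fun _ => 0) (fun _ => 0)
      (fun x y => if x = 1 ∧ y = 1 then -1 else 0)) := by
  refine ⟨rho0, Ediag, Ediag, rho0_psd, ?_, Ediag_psd, Ediag_psd, Ediag_sum, Ediag_sum, ?_⟩
  · simp [Matrix.trace, rho0, Fintype.sum_prod_type, Fin.sum_univ_two]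
    norm_num
  · intro a b x y
    fin_cases a <;> fin_cases b <;> fin_cases x <;> fin_cases y <;>
      simp [fromCorr, Matrix.trace, Matrix.mul_apply, Matrix.kroneckerMap_apply,
        Fintype.sum_prod_type, Fin.sum_univ_two, rho0, Ediag, Matrix.diagonal] <;>
      norm_num

lemma trace_sq_re {n : Type*} [Fintype n] (X : Matrix n n ℂ) :
    0 ≤ ((Xᴴ * X).trace).re ∧ ((Xᴴ * X).trace).im = 0 := by
  have h : (Xᴴ * X).trace = ((∑ j, ∑ i, Complex.normSq (X i j) : ℝ) : ℂ) := by
    push_cast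
    simp only [Matrix.trace, Matrix.diag, Matrix.mul_apply, Matrix.conjTranspose_apply]
    congr 1
    ext j
    congr 1
    ext i
    rw [RCLike.star_def]
    exact (Complex.normSq_eq_conj_mul_self).symm
  rw [h]
  constructor
  · rw [Complex.ofReal_re]
    exact Finset.sum_nonneg fun j _ => Finset.sum_nonneg fun i _ => Complex.normSq_nonneg _
  · rw [Complex.ofReal_im]

lemma trace_psd_mul {n : Type*} [Fintype n] [DecidableEq n] {M ρ : Matrix n n ℂ}
    (hM : M.PosSemidef) (hρ : ρ.PosSemidef) :
    0 ≤ ((M * ρ).trace).re ∧ ((M * ρ).trace).im = 0 := by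
  obtain ⟨A, rfl⟩ := (by open scoped MatrixOrder in exact CStarAlgebra.nonneg_iff_eq_star_mul_self.mp hM.nonneg :
    ∃ X : Matrix (n) (n) ℂ, _ = Xᴴ * X)
  obtain ⟨C, rfl⟩ := (by open scoped MatrixOrder in exact CStarAlgebra.nonneg_iff_eq_star_mul_self.mp hρ.nonneg :
    ∃ X : Matrix (n) (n) ℂ, _ = Xᴴ * X)
  have h : (Aᴴ * A * (Cᴴ * C)).trace = (((A * Cᴴ)ᴴ * (A * Cᴴ)).trace) := by
    rw [Matrix.conjTranspose_mul, Matrix.conjTranspose_conjTranspose]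
    calc (Aᴴ * A * (Cᴴ * C)).trace = ((Aᴴ * A * Cᴴ) * C).trace := by
          simp only [Matrix.mul_assoc]
      _ = (C * (Aᴴ * A * Cᴴ)).trace := (Matrix.trace_mul_comm _ _)
      _ = (C * Aᴴ * (A * Cᴴ)).trace := by simp only [Matrix.mul_assoc]
  rw [h]
  exact trace_sq_re _

lemma kron_conjTranspose {d : ℕ} (A B : Matrix (Fin d) (Fin d) ℂ) :
    (A ⊗ₖ B)ᴴ = Aᴴ ⊗ₖ Bᴴ := by
  ext p q
  simp [Matrix.conjTranspose_apply, Matrix.kroneckerMap_apply, star_mul']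

lemma kron_psd {d : ℕ} {A B : Matrix (Fin d) (Fin d) ℂ}
    (hA : A.PosSemidef) (hB : B.PosSemidef) : (A ⊗ₖ B).PosSemidef := by
  obtain ⟨A', rfl⟩ := (by open scoped MatrixOrder in exact CStarAlgebra.nonneg_iff_eq_star_mul_self.mp hA.nonneg :
    ∃ X : Matrix (Fin d) (Fin d) ℂ, _ = Xᴴ * X)
  obtain ⟨B', rfl⟩ := (by open scoped MatrixOrder in exact CStarAlgebra.nonneg_iff_eq_star_mul_self.mp hB.nonneg :
    ∃ X : Matrix (Fin d) (Fin d) ℂ, _ = Xᴴ * X)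
  rw [Matrix.mul_kronecker_mul, ← kron_conjTranspose]
  exact Matrix.posSemidef_conjTranspose_mul_self _

lemma qfinite_entries {P : Behaviour} (hP : P ∈ Qfinite) :
    ∀ a b x y, 0 ≤ P a b x y ∧ P a b x y ≤ 1 := by
  obtain ⟨d, hd, ρ, E, F, hρ, hρt, hE, hF, hEs, hFs, heq⟩ := hP
  intro a b x y
  have hnn : ∀ a' b' : Fin 2, 0 ≤ P a' b' x y := by
    intro a' b'
    have h := trace_psd_mul (kron_psd (hE x a') (hF y b')) hρ
    have := heq a' b' x y
    have hre : P a' b' x y = (((E x a' ⊗ₖ F y b') * ρ).trace).re := by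
      rw [← this, Complex.ofReal_re]
    rw [hre]; exact h.1
  refine ⟨hnn a b, ?_⟩
  have hsum : ∑ a' : Fin 2, ∑ b' : Fin 2, P a' b' x y = 1 := by
    have hC : ∑ a' : Fin 2, ∑ b' : Fin 2, (P a' b' x y : ℂ) = 1 := by
      simp only [heq, Fin.sum_univ_two]
      rw [← Matrix.trace_add, ← Matrix.trace_add, ← Matrix.trace_add,
        ← Matrix.add_mul, ← Matrix.add_mul, ← Matrix.add_mul,
        ← Matrix.kronecker_add, ← Matrix.kronecker_add, ← Matrix.add_kronecker]
      have h1 : F y 0 + F y 1 = 1 := by simpa [Fin.sum_univ_two] using hFs y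
      have h2 : E x 0 + E x 1 = 1 := by simpa [Fin.sum_univ_two] using hEs x
      rw [h1, h2, Matrix.one_kronecker_one, Matrix.one_mul, hρt]
    exact_mod_cast hC
  have h00 := hnn 0 0
  have h01 := hnn 0 1
  have h10 := hnn 1 0
  have h11 := hnn 1 1
  simp only [Fin.sum_univ_two] at hsum
  fin_cases a <;> fin_cases b <;> simp only [Fin.zero_eta, Fin.mk_one] <;> linarith

lemma bell_bdd (B : Behaviour) :
    BddAbove (bell B '' Q) := by
  refine ⟨∑ a : Fin 2, ∑ b : Fin 2, ∑ x : Fin 2, ∑ y : Fin 2, |B a b x y|, ?_⟩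
  rintro r ⟨P, hP, rfl⟩
  have hclosed : Q ⊆ {P : Behaviour | bell B P ≤ ∑ a : Fin 2, ∑ b : Fin 2, ∑ x : Fin 2, ∑ y : Fin 2, |B a b x y|} := by
    apply closure_minimal
    · intro P hP
      have hent := qfinite_entries hP
      simp only [Set.mem_setOf_eq, bell]
      refine Finset.sum_le_sum fun a _ => Finset.sum_le_sum fun b _ =>
        Finset.sum_le_sum fun x _ => Finset.sum_le_sum fun y _ => ?_
      have h1 := (hent a b x y).1
      have h2 := (hent a b x y).2
      have : B a b x y * P a b x y ≤ |B a b x y| * P a b x y := by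
        apply mul_le_mul_of_nonneg_right (le_abs_self _) h1
      calc B a b x y * P a b x y ≤ |B a b x y| * P a b x y := this
        _ ≤ |B a b x y| * 1 := by
            apply mul_le_mul_of_nonneg_left h2 (abs_nonneg _)
        _ = |B a b x y| := mul_one _
    · have hcont : Continuous (bell B) := by unfold bell; fun_prop
      exact isClosed_le hcont continuous_const
  exact hclosed hP

set_option maxHeartbeats 1000000 in
open Real in
/-- **`P_NE` is a quantum behaviour but not an exposed point of `Q`:** no Bell
function has `P_NE` as its unique maximiser over the quantum set. -/
theorem pne_quantum_not_exposed :
    PNE ∈ Q ∧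
    ¬ ∃ B : Behaviour, {P ∈ Q | bell B P = sSup (bell B '' Q)} = {PNE} := by
  -- PNE is quantum
  have hPNEc : (fun x y => -Real.cos (![π/3, -π] x - ![-(π/3), π] y))
      = ![![(1:ℝ) / 2, 1 / 2], ![1 / 2, -1]] := by
    funext x y
    fin_cases x <;> fin_cases y <;> simp only [Fin.zero_eta, Fin.mk_one, Matrix.cons_val_zero, Matrix.cons_val_one,
      Matrix.head_cons]
    · rw [show π/3 - -(π/3) = π - π/3 by ring, Real.cos_pi_sub, Real.cos_pi_div_three]; norm_num
    · rw [show π/3 - π = -(π - π/3) by ring, Real.cos_neg, Real.cos_pi_sub,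
        Real.cos_pi_div_three]; norm_num
    · rw [show -π - -(π/3) = -(π - π/3) by ring, Real.cos_neg, Real.cos_pi_sub,
        Real.cos_pi_div_three]; norm_num
    · rw [show -π - π = -(2*π) by ring, Real.cos_neg, Real.cos_two_pi]
  have hPNEQ : PNE ∈ Q := by
    have h := singlet_real ![π/3, -π] ![-(π/3), π]
    rw [hPNEc] at h
    exact subset_closure ⟨2, by norm_num, h⟩
  refine ⟨hPNEQ, ?_⟩
  rintro ⟨B, hB⟩
  have hmem : PNE ∈ ({PNE} : Set Behaviour) := rfl
  rw [← hB] at hmem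
  obtain ⟨hPQ, hPs⟩ := hmem
  set s := sSup (bell B '' Q) with hs
  have hub : ∀ P ∈ Q, bell B P ≤ s := fun P hP => le_csSup (bell_bdd B) ⟨P, hP, rfl⟩
  set m00 := (B 0 0 0 0 - B 0 1 0 0 - B 1 0 0 0 + B 1 1 0 0)/4 with hm00
  set m01 := (B 0 0 0 1 - B 0 1 0 1 - B 1 0 0 1 + B 1 1 0 1)/4 with hm01
  set m10 := (B 0 0 1 0 - B 0 1 1 0 - B 1 0 1 0 + B 1 1 1 0)/4 with hm10
  set m11 := (B 0 0 1 1 - B 0 1 1 1 - B 1 0 1 1 + B 1 1 1 1)/4 with hm11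
  set k := bell B (fromCorr (fun _ => 0) (fun _ => 0) (fun _ _ => 0)) with hk
  have hbell : ∀ c : Fin 2 → Fin 2 → ℝ,
      bell B (fromCorr (fun _ => 0) (fun _ => 0) c)
        = k + m00 * c 0 0 + m01 * c 0 1 + m10 * c 1 0 + m11 * c 1 1 := by
    intro c
    rw [hm00, hm01, hm10, hm11, hk]
    simp only [bell, fromCorr, Fin.sum_univ_two, Fin.isValue]
    norm_num
    ring
  -- value at PNE
  have hPNEval : k + m00 * (1/2) + m01 * (1/2) + m10 * (1/2) + m11 * (-1) = s := by
    rw [← hPs]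
    show _ = bell B (fromCorr (fun _ => 0) (fun _ => 0) ![![(1:ℝ)/2, 1/2], ![1/2, -1]])
    rw [hbell]
    norm_num
  -- the all-(-1) point gives β ≥ 0
  have hcm1 : (fun x y => -Real.cos (![0, 0] x - ![0, 0] y)) = (fun _ _ : Fin 2 => (-1:ℝ)) := by
    funext x y
    fin_cases x <;> fin_cases y <;> simp
  have hQm1 : fromCorr (fun _ => 0) (fun _ => 0) (fun _ _ => (-1:ℝ)) ∈ Q := by
    have h := singlet_real ![0, 0] ![0, 0]
    rw [hcm1] at h
    exact subset_closure ⟨2, by norm_num, h⟩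
  have hβnn : 0 ≤ m00 + m01 + m10 := by
    have h := hub _ hQm1
    rw [hbell] at h
    rw [← hPNEval] at h
    linarith
  -- the curve points give β ≤ 0
  have hβle : ∀ ε : ℝ, 0 < ε → ε ≤ 1 → m00 + m01 + m10 ≤ 12 * |m11| * ε := by
    intro ε hε0 hε1
    have hccurve : (fun x y => -Real.cos (![π/3 + ε/2, -(π + 3*ε/2)] x
        - ![-(π/3 + ε/2), π + 3*ε/2] y))
        = ![![-Real.cos (2*π/3 + ε), -Real.cos (2*π/3 + ε)],
            ![-Real.cos (2*π/3 + ε), -Real.cos (3*ε)]] := by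
      funext x y
      fin_cases x <;> fin_cases y <;> simp only [Fin.zero_eta, Fin.mk_one, Matrix.cons_val_zero, Matrix.cons_val_one,
        Matrix.head_cons]
      · rw [show π/3 + ε/2 - -(π/3 + ε/2) = 2*π/3 + ε by ring]
      · rw [show π/3 + ε/2 - (π + 3*ε/2) = -(2*π/3 + ε) by ring, Real.cos_neg]
      · rw [show -(π + 3*ε/2) - -(π/3 + ε/2) = -(2*π/3 + ε) by ring, Real.cos_neg]
      · rw [show -(π + 3*ε/2) - (π + 3*ε/2) = -(3*ε + 2*π) by ring, Real.cos_neg,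
          Real.cos_add_two_pi]
    have hQε : fromCorr (fun _ => 0) (fun _ => 0)
        ![![-Real.cos (2*π/3 + ε), -Real.cos (2*π/3 + ε)],
          ![-Real.cos (2*π/3 + ε), -Real.cos (3*ε)]] ∈ Q := by
      have h := singlet_real ![π/3 + ε/2, -(π + 3*ε/2)] ![-(π/3 + ε/2), π + 3*ε/2]
      rw [hccurve] at h
      exact subset_closure ⟨2, by norm_num, h⟩
    have hineq := hub _ hQε
    rw [hbell] at hineq
    rw [← hPNEval] at hineq
    simp only [Matrix.cons_val_zero, Matrix.cons_val_one, Matrix.head_cons] at hineq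
    clear hccurve hQε
    -- trig estimates
    have e1 : Real.cos (2*π/3 + ε) = Real.cos (2*π/3) * Real.cos ε
        - Real.sin (2*π/3) * Real.sin ε := Real.cos_add _ _
    have e2 : Real.cos (2*π/3) = -(1/2) := by
      rw [show 2*π/3 = π - π/3 by ring, Real.cos_pi_sub, Real.cos_pi_div_three]
    have e3 : Real.sin (2*π/3) = Real.sqrt 3 / 2 := by
      rw [show 2*π/3 = π - π/3 by ring, Real.sin_pi_sub, Real.sin_pi_div_three]
    have e4 : ε - ε^3/4 < Real.sin ε := by nlinarith [Real.sin_gt_sub_cube hε0, pow_pos hε0 3]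
    have e5 : 1 - ε^2/2 ≤ Real.cos ε := Real.one_sub_sq_div_two_le_cos
    have e6 : (1.7:ℝ) ≤ Real.sqrt 3 := by
      nlinarith [Real.sq_sqrt (show (0:ℝ) ≤ 3 by norm_num), Real.sqrt_nonneg 3]
    have hsq : ε^2 ≤ ε := by nlinarith
    have hs34 : 3/4 * ε ≤ Real.sin ε := by nlinarith
    have hp : 1.7 * (3/4 * ε) ≤ Real.sqrt 3 * Real.sin ε := by
      nlinarith [mul_nonneg (by linarith : (0:ℝ) ≤ Real.sqrt 3 - 1.7)
        (by linarith : (0:ℝ) ≤ Real.sin ε - 3/4 * ε)]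
    have hcos1 : 3/8 * ε ≤ -Real.cos (2*π/3 + ε) - 1/2 := by
      rw [e1, e2, e3]
      nlinarith
    have hcos2 : 1 - Real.cos (3*ε) ≤ 9/2 * ε^2 := by
      have h9 := Real.one_sub_sq_div_two_le_cos (x := 3*ε)
      nlinarith
    have hm11abs : m11 * (Real.cos (3*ε) - 1) ≤ |m11| * (1 - Real.cos (3*ε)) := by
      have h1 : Real.cos (3*ε) - 1 ≤ 0 := by linarith [Real.cos_le_one (3*ε)]
      nlinarith [neg_abs_le m11, le_abs_self m11]
    -- main chain
    have hchain : (m00 + m01 + m10) * (3/8 * ε) ≤ |m11| * (9/2 * ε^2) := by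
      have hL : (m00 + m01 + m10) * (3/8 * ε)
          ≤ (m00 + m01 + m10) * (-Real.cos (2*π/3 + ε) - 1/2) := by
        apply mul_le_mul_of_nonneg_left hcos1 hβnn
      have hM : (m00 + m01 + m10) * (-Real.cos (2*π/3 + ε) - 1/2)
          ≤ m11 * (Real.cos (3*ε) - 1) := by nlinarith [hineq]
      have hR : |m11| * (1 - Real.cos (3*ε)) ≤ |m11| * (9/2 * ε^2) := by
        apply mul_le_mul_of_nonneg_left hcos2 (abs_nonneg _)
      linarith
    nlinarith [hchain, mul_pos hε0 hε0]
  have hβ0 : m00 + m01 + m10 ≤ 0 := by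
    by_contra hpos
    push_neg at hpos
    set ε := min 1 ((m00 + m01 + m10) / (24 * (|m11| + 1))) with hε
    have hD : (0:ℝ) < 24 * (|m11| + 1) := by positivity
    have hε0 : 0 < ε := lt_min one_pos (div_pos hpos hD)
    have hε1 : ε ≤ 1 := min_le_left _ _
    have h := hβle ε hε0 hε1
    have h2 : ε ≤ (m00 + m01 + m10) / (24 * (|m11| + 1)) := min_le_right _ _
    have h2' : ε * (24 * (|m11| + 1)) ≤ m00 + m01 + m10 := (le_div_iff₀ hD).mp h2
    nlinarith [mul_nonneg (abs_nonneg m11) hε0.le, hε0]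
  have hβeq : m00 + m01 + m10 = 0 := le_antisymm hβ0 hβnn
  -- the classical point
  have hQ0 : fromCorr (fun _ => 0) (fun _ => 0)
      (fun x y => if x = 1 ∧ y = 1 then -1 else 0) ∈ Q :=
    subset_closure ⟨2, by norm_num, local0_real⟩
  have hval0 : bell B (fromCorr (fun _ => 0) (fun _ => 0)
      (fun x y => if x = 1 ∧ y = 1 then -1 else 0)) = s := by
    rw [hbell]
    norm_num
    linarith [hPNEval, hβeq]
  have hfin : fromCorr (fun _ => 0) (fun _ => 0)
      (fun x y => if x = 1 ∧ y = 1 then -1 else 0) ∈ ({PNE} : Set Behaviour) := by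
    rw [← hB]
    exact ⟨hQ0, hval0⟩
  have heq : fromCorr (fun _ => 0) (fun _ => 0)
      (fun x y => if x = 1 ∧ y = 1 then -1 else 0) = PNE := hfin
  have hcontra := congrFun (congrFun (congrFun (congrFun heq 0) 0) 0) 0
  simp only [fromCorr, PNE] at hcontra
  norm_num at hcontra
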